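/- For every n ≥ 4, in the target group G_D(n), the symmetric generators indexed by disjoint pairs commute: t_{12}·t_{34} = t_{34}·t_{12}. More generally, for any four distinct indices i, j, k, l in {1,…,n}, t_{ij}·t_{kl} = t_{kl}·t_{ij}. -/

import Mathlib

open Monoid Pointwise

/-- The type of `k`-element subsets of `Fin n`. -/
abbrev KSub (n k : ℕ) := {s : Finset (Fin n) // s.card = k}

/-- The free product of copies of `ℤ/2ℤ` indexed by the `k`-element subsets of `Fin n`. -/
abbrev FP (n k : ℕ) := Monoid.CoprodI (fun _ : KSub n k => Multiplicative (ZMod 2))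

/-- The symmetric generator `t_S`. -/
def tFP {n k : ℕ} (S : KSub n k) : FP n k :=
  Monoid.CoprodI.of (i := S) (Multiplicative.ofAdd (1 : ZMod 2))

/-- The action of a permutation of `Fin n` on the `k`-element subsets. -/
instance KSub.instMulAction (n k : ℕ) : MulAction (Equiv.Perm (Fin n)) (KSub n k) where
  smul σ S := ⟨σ • S.1, by rw [Finset.card_smul_finset]; exact S.2⟩
  one_smul S := Subtype.ext (one_smul _ S.1)
  mul_smul σ τ S := Subtype.ext (mul_smul σ τ S.1)

/-- The endomorphism of the free product induced by a permutation of `Fin n`. -/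
def fpHom {n k : ℕ} (σ : Equiv.Perm (Fin n)) : FP n k →* FP n k :=
  Monoid.CoprodI.lift (fun S => Monoid.CoprodI.of (M := fun _ : KSub n k => Multiplicative (ZMod 2)) (i := σ • S))

lemma fpHom_comp {n k : ℕ} (σ τ : Equiv.Perm (Fin n)) :
    (fpHom (n := n) (k := k) σ).comp (fpHom τ) = fpHom (σ * τ) := by
  apply Monoid.CoprodI.ext_hom
  intro S
  ext x
  simp [fpHom, Monoid.CoprodI.lift_of, mul_smul]

lemma fpHom_one {n k : ℕ} : fpHom (n := n) (k := k) 1 = MonoidHom.id _ := by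
  apply Monoid.CoprodI.ext_hom
  intro S
  ext x
  simp [fpHom, Monoid.CoprodI.lift_of]

/-- The action of `Sym(Fin n)` on the free product, permuting the free factors. -/
def fpAut (n k : ℕ) : Equiv.Perm (Fin n) →* MulAut (FP n k) :=
  MonoidHom.mk' (fun σ =>
    { toFun := fpHom σ
      invFun := fpHom σ⁻¹
      left_inv := fun x => by
        have h := fpHom_comp (n := n) (k := k) σ⁻¹ σ
        rw [inv_mul_cancel, fpHom_one] at h
        exact DFunLike.congr_fun h x
      right_inv := fun x => by
        have h := fpHom_comp (n := n) (k := k) σ σ⁻¹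
        rw [mul_inv_cancel, fpHom_one] at h
        exact DFunLike.congr_fun h x
      map_mul' := map_mul _ })
    (fun σ τ => by
      ext x
      exact (DFunLike.congr_fun (fpHom_comp (n := n) (k := k) σ τ) x).symm)

/-- The progenitor `2^{⋆C(n,k)} : Sₙ`. -/
abbrev Progenitor (n k : ℕ) := FP n k ⋊[fpAut n k] Equiv.Perm (Fin n)

/-- The target group: the quotient of the progenitor by the normal closure of the
single relator `(t_{S₀}·σ₀)³`. -/
abbrev TargetGroup (n k : ℕ) (S₀ : KSub n k) (σ₀ : Equiv.Perm (Fin n)) :=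
  Progenitor n k ⧸ Subgroup.normalClosure
    {(SemidirectProduct.inl (tFP S₀) * SemidirectProduct.inr σ₀) ^ 3}

/-- The image in the target group of the symmetric generator `t_S`. -/
def tbar {n k : ℕ} (S₀ : KSub n k) (σ₀ : Equiv.Perm (Fin n)) (S : KSub n k) :
    TargetGroup n k S₀ σ₀ :=
  QuotientGroup.mk (SemidirectProduct.inl (tFP S))

/-- The canonical map from the control group `Sₙ` to the target group. -/
def pbar {n k : ℕ} (S₀ : KSub n k) (σ₀ : Equiv.Perm (Fin n)) :
    Equiv.Perm (Fin n) →* TargetGroup n k S₀ σ₀ :=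
  (QuotientGroup.mk' _).comp (SemidirectProduct.inr)

/-- The subset `{1, 2}` (0-based: `{0, 1}`) of `Fin n`. -/
def S12 (n : ℕ) (hn : 4 ≤ n) : KSub n 2 :=
  ⟨{⟨0, by omega⟩, ⟨1, by omega⟩}, Finset.card_pair (by simp [Fin.ext_iff])⟩

/-- The transposition `(2 3)` (0-based: `(1 2)`) of `Fin n`. -/
def σD (n : ℕ) (hn : 4 ≤ n) : Equiv.Perm (Fin n) :=
  Equiv.swap ⟨1, by omega⟩ ⟨2, by omega⟩

/-- The target group `G_D(n)`, obtained by factoring the progenitor `2^{⋆C(n,2)} : Sₙ`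
by the single relator `(t_{12}·(2 3))³`. -/
abbrev GD (n : ℕ) (hn : 4 ≤ n) := TargetGroup n 2 (S12 n hn) (σD n hn)

/-- The symmetric generator `t_{ij}` of `G_D(n)`. -/
def tD {n : ℕ} (hn : 4 ≤ n) (i j : Fin n) (h : i ≠ j) : GD n hn :=
  tbar (S12 n hn) (σD n hn) ⟨{i, j}, Finset.card_pair h⟩

/-- The canonical map from the control group `Sₙ` to `G_D(n)`. -/
def pD {n : ℕ} (hn : 4 ≤ n) : Equiv.Perm (Fin n) →* GD n hn :=
  pbar (S12 n hn) (σD n hn)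


section AuxProof

open SemidirectProduct

lemma fpAut_tFP {n k : ℕ} (σ : Equiv.Perm (Fin n)) (S : KSub n k) :
    fpAut n k σ (tFP S) = tFP (σ • S) := by
  show fpHom σ (tFP S) = _
  rw [tFP, fpHom, Monoid.CoprodI.lift_of]
  rfl

lemma tFP_sq {n k : ℕ} (S : KSub n k) : tFP S * tFP S = 1 := by
  rw [tFP, ← map_mul]
  have h : (Multiplicative.ofAdd (1 : ZMod 2)) * (Multiplicative.ofAdd (1 : ZMod 2)) = 1 := by
    decide
  rw [h, map_one]

lemma tD_sq {n : ℕ} (hn : 4 ≤ n) (i j : Fin n) (h : i ≠ j) :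
    tD hn i j h * tD hn i j h = 1 := by
  show (QuotientGroup.mk _ : GD n hn) * QuotientGroup.mk _ = 1
  rw [← QuotientGroup.mk_mul, ← map_mul, tFP_sq, map_one, QuotientGroup.mk_one]

lemma tD_comm' {n : ℕ} (hn : 4 ≤ n) (i j : Fin n) (h : j ≠ i) (h' : i ≠ j) :
    tD hn j i h = tD hn i j h' := by
  unfold tD
  exact congrArg _ (Subtype.ext (Finset.pair_comm j i))

lemma tD_congr {n : ℕ} (hn : 4 ≤ n) {i j i' j' : Fin n} (hi : i = i') (hj : j = j')
    (h : i ≠ j) (h' : i' ≠ j') : tD hn i j h = tD hn i' j' h' := by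
  subst hi; subst hj; rfl

lemma pD_swap_sq {n : ℕ} (hn : 4 ≤ n) (a b : Fin n) :
    pD hn (Equiv.swap a b) * pD hn (Equiv.swap a b) = 1 := by
  rw [← map_mul, Equiv.swap_mul_self, map_one]

lemma smul_pair {n : ℕ} (π : Equiv.Perm (Fin n)) (i j : Fin n) (h : i ≠ j) (h' : π i ≠ π j) :
    π • (⟨{i, j}, Finset.card_pair h⟩ : KSub n 2) = ⟨{π i, π j}, Finset.card_pair h'⟩ := by
  apply Subtype.ext
  show π • ({i, j} : Finset (Fin n)) = {π i, π j}
  rw [Finset.smul_finset_def]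
  simp [Equiv.Perm.smul_def, Finset.image_insert]

lemma pbar_tbar {n k : ℕ} (S₀ : KSub n k) (σ₀ : Equiv.Perm (Fin n))
    (π : Equiv.Perm (Fin n)) (S : KSub n k) :
    pbar S₀ σ₀ π * tbar S₀ σ₀ S = tbar S₀ σ₀ (π • S) * pbar S₀ σ₀ π := by
  show (QuotientGroup.mk _ : TargetGroup n k S₀ σ₀) * QuotientGroup.mk _ =
    QuotientGroup.mk _ * QuotientGroup.mk _
  rw [← QuotientGroup.mk_mul, ← QuotientGroup.mk_mul]
  try congr 1
  all_goals try rw [← fpAut_tFP π S, SemidirectProduct.inl_aut]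
  all_goals group

lemma pD_tD {n : ℕ} (hn : 4 ≤ n) (π : Equiv.Perm (Fin n)) (i j : Fin n)
    (h : i ≠ j) (h' : π i ≠ π j) :
    pD hn π * tD hn i j h = tD hn (π i) (π j) h' * pD hn π := by
  have hp := pbar_tbar (S12 n hn) (σD n hn) π ⟨{i, j}, Finset.card_pair h⟩
  rw [smul_pair π i j h h'] at hp
  exact hp

lemma exists_perm3 {n : ℕ} (hn : 4 ≤ n) (a b c : Fin n)
    (hab : a ≠ b) (hac : a ≠ c) (hbc : b ≠ c) :
    ∃ π : Equiv.Perm (Fin n), ∀ (p0 : 0 < n) (p1 : 1 < n) (p2 : 2 < n),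
      π ⟨0, p0⟩ = a ∧ π ⟨1, p1⟩ = b ∧ π ⟨2, p2⟩ = c := by
  have h0 : (0 : ℕ) < n := by omega
  have h1 : (1 : ℕ) < n := by omega
  have h2 : (2 : ℕ) < n := by omega
  set e0 : Fin n := ⟨0, h0⟩ with he0
  set e1 : Fin n := ⟨1, h1⟩ with he1
  set e2 : Fin n := ⟨2, h2⟩ with he2
  have h01 : e0 ≠ e1 := by simp [he0, he1, Fin.ext_iff]
  have h02 : e0 ≠ e2 := by simp [he0, he2, Fin.ext_iff]
  have h12 : e1 ≠ e2 := by simp [he1, he2, Fin.ext_iff]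
  set π₁ : Equiv.Perm (Fin n) := Equiv.swap e0 a with hπ₁
  set π₂ : Equiv.Perm (Fin n) := π₁ * Equiv.swap e1 (π₁⁻¹ b) with hπ₂
  set π₃ : Equiv.Perm (Fin n) := π₂ * Equiv.swap e2 (π₂⁻¹ c) with hπ₃
  have hp1 : π₁ e0 = a := Equiv.swap_apply_left _ _
  have hb1 : e0 ≠ π₁⁻¹ b := by
    intro h
    exact hab (by rw [← hp1, h, ← Equiv.Perm.mul_apply, mul_inv_cancel, Equiv.Perm.one_apply])
  have hp2_0 : π₂ e0 = a := by
    show π₁ (Equiv.swap e1 (π₁⁻¹ b) e0) = a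
    rw [Equiv.swap_apply_of_ne_of_ne h01 hb1]
    exact hp1
  have hp2_1 : π₂ e1 = b := by
    show π₁ (Equiv.swap e1 (π₁⁻¹ b) e1) = b
    rw [Equiv.swap_apply_left, ← Equiv.Perm.mul_apply, mul_inv_cancel, Equiv.Perm.one_apply]
  have hc0 : e0 ≠ π₂⁻¹ c := by
    intro h
    exact hac (by rw [← hp2_0, h, ← Equiv.Perm.mul_apply, mul_inv_cancel, Equiv.Perm.one_apply])
  have hc1 : e1 ≠ π₂⁻¹ c := by
    intro h
    exact hbc (by rw [← hp2_1, h, ← Equiv.Perm.mul_apply, mul_inv_cancel, Equiv.Perm.one_apply])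
  refine ⟨π₃, fun p0 p1 p2 => ⟨?_, ?_, ?_⟩⟩
  · show π₂ (Equiv.swap e2 (π₂⁻¹ c) e0) = a
    rw [Equiv.swap_apply_of_ne_of_ne h02 hc0]
    exact hp2_0
  · show π₂ (Equiv.swap e2 (π₂⁻¹ c) e1) = b
    rw [Equiv.swap_apply_of_ne_of_ne h12 hc1]
    exact hp2_1
  · show π₂ (Equiv.swap e2 (π₂⁻¹ c) e2) = c
    rw [Equiv.swap_apply_left, ← Equiv.Perm.mul_apply, mul_inv_cancel, Equiv.Perm.one_apply]

lemma relcube {n : ℕ} (hn : 4 ≤ n) (π : Equiv.Perm (Fin n)) :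
    (tbar (S12 n hn) (σD n hn) (π • S12 n hn) *
      pbar (S12 n hn) (σD n hn) (π * σD n hn * π⁻¹)) ^ 3 = 1 := by
  have hmem : (SemidirectProduct.inl (tFP (π • S12 n hn)) *
      SemidirectProduct.inr (π * σD n hn * π⁻¹) : Progenitor n 2) ^ 3 ∈
      Subgroup.normalClosure
        {(SemidirectProduct.inl (tFP (S12 n hn)) * SemidirectProduct.inr (σD n hn)) ^ 3} := by
    have h1 : (SemidirectProduct.inl (tFP (π • S12 n hn)) *
        SemidirectProduct.inr (π * σD n hn * π⁻¹) : Progenitor n 2) ^ 3 =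
        SemidirectProduct.inr π *
          (SemidirectProduct.inl (tFP (S12 n hn)) * SemidirectProduct.inr (σD n hn)) ^ 3 *
          (SemidirectProduct.inr π)⁻¹ := by
      rw [← conj_pow]
      congr 1
      all_goals try rw [← fpAut_tFP π (S12 n hn)]
      all_goals try rw [SemidirectProduct.inl_aut]
      all_goals try rw [map_mul, map_mul, map_inv]
      all_goals try group
    rw [h1]
    exact Subgroup.Normal.conj_mem Subgroup.normalClosure_normal _
      (Subgroup.subset_normalClosure (Set.mem_singleton _)) _
  have h := (QuotientGroup.eq_one_iff _).mpr hmem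
  rw [QuotientGroup.mk_pow, QuotientGroup.mk_mul] at h
  exact h

lemma triple {n : ℕ} (hn : 4 ≤ n) (i j k : Fin n) (hij : i ≠ j) (hik : i ≠ k) (hjk : j ≠ k) :
    tD hn i j hij * (tD hn i k hik * tD hn i j hij) = pD hn (Equiv.swap j k) := by
  obtain ⟨π, hπ⟩ := exists_perm3 hn i j k hij hik hjk
  have h0 : ∀ p : 0 < n, π ⟨0, p⟩ = i := fun p => (hπ p (by omega) (by omega)).1
  have h1 : ∀ p : 1 < n, π ⟨1, p⟩ = j := fun p => (hπ (by omega) p (by omega)).2.1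
  have h2 : ∀ p : 2 < n, π ⟨2, p⟩ = k := fun p => (hπ (by omega) (by omega) p).2.2
  have hc := relcube hn π
  have hS : π • S12 n hn = (⟨{i, j}, Finset.card_pair hij⟩ : KSub n 2) := by
    apply Subtype.ext
    show π • ({(⟨0, by omega⟩ : Fin n), ⟨1, by omega⟩} : Finset (Fin n)) = {i, j}
    rw [Finset.smul_finset_def]
    simp only [Finset.image_insert, Finset.image_singleton, Equiv.Perm.smul_def]
    rw [h0, h1]
  have hτ : π * σD n hn * π⁻¹ = Equiv.swap j k := by
    show π * Equiv.swap ⟨1, by omega⟩ ⟨2, by omega⟩ * π⁻¹ = Equiv.swap j k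
    rw [← Equiv.swap_apply_apply, h1, h2]
  rw [hS, hτ] at hc
  set t : GD n hn := tD hn i j hij with ht_def
  set u : GD n hn := tD hn i k hik with hu_def
  set s : GD n hn := pD hn (Equiv.swap j k) with hs_def
  have hc' : (t * s) ^ 3 = 1 := hc
  have hss : s * s = 1 := pD_swap_sq hn j k
  have hst : s * t = u * s := by
    rw [ht_def, hs_def,
      pD_tD hn (Equiv.swap j k) i j hij (fun e => hij ((Equiv.swap j k).injective e))]
    rw [tD_congr hn (Equiv.swap_apply_of_ne_of_ne hij hik) (Equiv.swap_apply_left j k) _ hik]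
  have hu : s * (t * s) = u := by
    rw [← mul_assoc, hst, mul_assoc, hss, mul_one]
  have hc3 : t * (s * (t * (s * (t * s)))) = 1 := by
    rw [show ((t * s) ^ 3 : GD n hn) = t * (s * (t * (s * (t * s)))) by
      rw [pow_three]; simp only [mul_assoc]] at hc'
    exact hc'
  have key : t * (s * (t * (s * t))) = s := by
    calc t * (s * (t * (s * t)))
        = t * (s * (t * (s * (t * (s * s))))) := by rw [hss, mul_one]
      _ = (t * (s * (t * (s * (t * s))))) * s := by simp only [mul_assoc]
      _ = s := by rw [hc3, one_mul]
  calc t * (u * t) = t * ((s * (t * s)) * t) := by rw [hu]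
    _ = t * (s * (t * (s * t))) := by simp only [mul_assoc]
    _ = s := key

lemma abstract_comm {G : Type*} [Group G] (A B C Gg p1 p2 : G)
    (hA : A * A = 1) (hC : C * C = 1) (hGG : Gg * Gg = 1)
    (hp1 : p1 * p1 = 1) (hp2 : p2 * p2 = 1)
    (h1 : A * (C * A) = p1)
    (h2 : Gg * (A * Gg) = p2)
    (h3 : C * (B * C) = p2)
    (h4 : A * p2 = p2 * Gg)
    (h5 : p1 * Gg = B * p1) :
    A * B = B * A := by
  have e1 : A * C = p1 * A := by
    calc A * C = A * (C * (A * A)) := by rw [hA, mul_one]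
      _ = (A * (C * A)) * A := by simp only [mul_assoc]
      _ = p1 * A := by rw [h1]
  have r3e : C * A = A * p1 := by
    calc C * A = (A * A) * (C * A) := by rw [hA, one_mul]
      _ = A * (A * (C * A)) := by simp only [mul_assoc]
      _ = A * p1 := by rw [h1]
  have r5'e : Gg * A = p2 * Gg := by
    calc Gg * A = Gg * (A * (Gg * Gg)) := by rw [hGG, mul_one]
      _ = (Gg * (A * Gg)) * Gg := by simp only [mul_assoc]
      _ = p2 * Gg := by rw [h2]
  have eB : C * (p2 * C) = B := by
    calc C * (p2 * C) = C * ((C * (B * C)) * C) := by rw [h3]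
      _ = (C * C) * (B * (C * C)) := by simp only [mul_assoc]
      _ = B := by rw [hC, one_mul, mul_one]
  have r2x : ∀ x, A * (C * x) = p1 * (A * x) := fun x => by
    rw [← mul_assoc, e1, mul_assoc]
  have r5x : ∀ x, A * (p2 * x) = p2 * (Gg * x) := fun x => by
    rw [← mul_assoc, h4, mul_assoc]
  have r5'x : ∀ x, Gg * (A * x) = p2 * (Gg * x) := fun x => by
    rw [← mul_assoc, r5'e, mul_assoc]
  have rp2x : ∀ x, p2 * (p2 * x) = x := fun x => by
    rw [← mul_assoc, hp2, one_mul]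
  have r6x : ∀ x, p1 * (Gg * x) = B * (p1 * x) := fun x => by
    rw [← mul_assoc, h5, mul_assoc]
  have key : A * (B * A) = B := by
    calc A * (B * A) = A * (C * (p2 * (C * A))) := by rw [← eB]; simp only [mul_assoc]
      _ = p1 * (A * (p2 * (C * A))) := r2x _
      _ = p1 * (p2 * (Gg * (C * A))) := by rw [r5x]
      _ = p1 * (p2 * (Gg * (A * p1))) := by rw [r3e]
      _ = p1 * (p2 * (p2 * (Gg * p1))) := by rw [r5'x]
      _ = p1 * (Gg * p1) := by rw [rp2x]
      _ = B * (p1 * p1) := r6x _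
      _ = B := by rw [hp1, mul_one]
  calc A * B = A * (B * (A * A)) := by rw [hA, mul_one]
    _ = (A * (B * A)) * A := by simp only [mul_assoc]
    _ = B * A := by rw [key]

lemma commute_gen {n : ℕ} (hn : 4 ≤ n) (i j k l : Fin n) (hij : i ≠ j) (hkl : k ≠ l)
    (hik : i ≠ k) (hil : i ≠ l) (hjk : j ≠ k) (hjl : j ≠ l) :
    tD hn i j hij * tD hn k l hkl = tD hn k l hkl * tD hn i j hij := by
  apply abstract_comm (tD hn i j hij) (tD hn k l hkl) (tD hn i k hik) (tD hn j l hjl)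
    (pD hn (Equiv.swap j k)) (pD hn (Equiv.swap i l))
  · exact tD_sq hn i j hij
  · exact tD_sq hn i k hik
  · exact tD_sq hn j l hjl
  · exact pD_swap_sq hn j k
  · exact pD_swap_sq hn i l
  · exact triple hn i j k hij hik hjk
  · -- Gg * (A * Gg) = p2
    have h := triple hn j l i hjl hij.symm hil.symm
    rw [tD_comm' hn i j hij.symm hij, Equiv.swap_comm l i] at h
    exact h
  · -- C * (B * C) = p2
    have h := triple hn k i l hik.symm hkl hil
    rw [tD_comm' hn i k hik.symm hik] at h
    exact h
  · -- A * p2 = p2 * Gg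
    have h := pD_tD hn (Equiv.swap i l) l j hjl.symm
      (fun e => hjl.symm ((Equiv.swap i l).injective e))
    rw [tD_congr hn (Equiv.swap_apply_right i l)
      (Equiv.swap_apply_of_ne_of_ne hij.symm hjl) _ hij] at h
    rw [tD_comm' hn j l hjl.symm hjl] at h
    exact h.symm
  · -- p1 * Gg = B * p1
    have h := pD_tD hn (Equiv.swap j k) j l hjl
      (fun e => hjl ((Equiv.swap j k).injective e))
    rw [tD_congr hn (Equiv.swap_apply_left j k)
      (Equiv.swap_apply_of_ne_of_ne hjl.symm hkl.symm) _ hkl] at h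
    exact h

end AuxProof

/-- For every `n ≥ 4`, in `G_D(n)` symmetric generators indexed by disjoint
pairs commute: `t_{12}·t_{34} = t_{34}·t_{12}` (written 0-based below) and, more generally,
`t_{ij}·t_{kl} = t_{kl}·t_{ij}` for any four pairwise distinct indices `i, j, k, l`. -/
theorem targetGroup_D_disjoint_generators_commute (n : ℕ) (hn : 4 ≤ n) :
    (tD hn ⟨0, by omega⟩ ⟨1, by omega⟩ (by simp [Fin.ext_iff]) *
          tD hn ⟨2, by omega⟩ ⟨3, by omega⟩ (by simp [Fin.ext_iff]) =
        tD hn ⟨2, by omega⟩ ⟨3, by omega⟩ (by simp [Fin.ext_iff]) *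
          tD hn ⟨0, by omega⟩ ⟨1, by omega⟩ (by simp [Fin.ext_iff])) ∧
      ∀ (i j k l : Fin n) (hij : i ≠ j) (hkl : k ≠ l),
        i ≠ k → i ≠ l → j ≠ k → j ≠ l →
          tD hn i j hij * tD hn k l hkl = tD hn k l hkl * tD hn i j hij := by
  constructor
  · exact commute_gen hn _ _ _ _ _ _ (by simp [Fin.ext_iff]) (by simp [Fin.ext_iff])
      (by simp [Fin.ext_iff]) (by simp [Fin.ext_iff])
  · intro i j k l hij hkl hik hil hjk hjl
    exact commute_gen hn i j k l hij hkl hik hil hjk hjl
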